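/- Let V = iV₂ satisfy Assumption (R) on ℝ and let W_t(x) := V₂(tx)/V₂(t). Then there exist C > 0 and t₀ > 0 such that for all t ≥ t₀, every choice of sign ∓, and every u ∈ C_c^∞(ℝ,ℂ): ‖∓u' + W_t·u‖²_{L²(ℝ)} + ‖u‖²_{L²(ℝ)} ≥ C·(‖u'‖²_{L²(ℝ)} + ‖W_t·u‖²_{L²(ℝ)} + ‖u‖²_{L²(ℝ)}); in particular the constant C is independent of t. -/

import Mathlib

open MeasureTheory Filter

/-- The L² norm over ℝ. -/
noncomputable def L2R (f : ℝ → ℂ) : ℝ :=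
  (eLpNorm f 2 volume).toReal

/-- The Japanese bracket ⟨x⟩ = √(1+x²). -/
noncomputable def jbr (x : ℝ) : ℝ := Real.sqrt (1 + x ^ 2)

/-- The Fourier transform 𝓕u(ξ) = (2π)^{−1/2} ∫ e^{−iξx} u(x) dx. -/
noncomputable def FT (u : ℝ → ℂ) (ξ : ℝ) : ℂ :=
  (Real.sqrt (2 * Real.pi) : ℂ)⁻¹ * ∫ x : ℝ, Complex.exp (-(Complex.I * (ξ : ℂ) * (x : ℂ))) * u x

/-- The inverse Fourier transform 𝓕⁻¹u(x) = (2π)^{−1/2} ∫ e^{ixξ} u(ξ) dξ. -/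
noncomputable def IFT (u : ℝ → ℂ) (x : ℝ) : ℂ :=
  (Real.sqrt (2 * Real.pi) : ℂ)⁻¹ * ∫ ξ : ℝ, Complex.exp (Complex.I * (x : ℂ) * (ξ : ℂ)) * u ξ

/-- ι(t) = sup_x |(1+W_t(x))⁻¹ − (1+|x|^β)⁻¹| where W_t(x) = V₂(tx)/V₂(t). -/
noncomputable def iotaR (V₂ : ℝ → ℝ) (β t : ℝ) : ℝ :=
  ⨆ x : ℝ, |(1 + V₂ (t * x) / V₂ t)⁻¹ - (1 + |x| ^ β)⁻¹|

/-- κ_β = inf over nonzero C_c^∞ φ of ‖−φ' + |x|^β φ‖/‖φ‖, the reciprocal of the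
norm of the inverse of the generalised Airy operator A_β = −∂ₓ + |x|^β. -/
noncomputable def airyBetaInvNorm (β : ℝ) : ℝ :=
  sInf { c : ℝ | ∃ φ : ℝ → ℂ, ContDiff ℝ (⊤ : ℕ∞) φ ∧ HasCompactSupport φ ∧ φ ≠ 0 ∧
    c = L2R (fun x => -(deriv φ x) + Complex.ofReal (|x| ^ β) * φ x) / L2R φ }

/-- Assumption (R): V = iV₂ with V₂ : ℝ → [0,∞) smooth, even, eventually increasing,
regularly varying of index β > 0, with controlled derivatives. -/
structure AssumptionR (V₂ : ℝ → ℝ) (β : ℝ) : Prop where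
  beta_pos : 0 < β
  nonneg : ∀ x, 0 ≤ V₂ x
  smooth : ContDiff ℝ (⊤ : ℕ∞) V₂
  even : ∀ x, V₂ (-x) = V₂ x
  eventually_incr : ∃ x₀ > 0, ∀ x > x₀, 0 < deriv V₂ x
  reg_var : ∀ x > 0, Tendsto (fun t => V₂ (t * x) / V₂ t) atTop (nhds (|x| ^ β))
  controlled_derivs : ∀ n : ℕ, 1 ≤ n → ∃ C > 0, ∀ x : ℝ,
      |iteratedDeriv n V₂ x| ≤ C * (1 + V₂ x) / jbr x ^ n

open scoped ENNReal in
lemma L2R_sq {f : ℝ → ℂ} (hf : Continuous f) (hs : HasCompactSupport f) :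
    L2R f ^ 2 = ∫ x, ‖f x‖ ^ 2 := by
  have hm : MemLp f 2 volume := hf.memLp_of_hasCompactSupport hs
  have h0 : (0:ℝ) ≤ ∫ x, ‖f x‖ ^ 2 := integral_nonneg fun x => by positivity
  rw [L2R, hm.eLpNorm_eq_integral_rpow_norm (by norm_num) (by norm_num)]
  rw [ENNReal.toReal_ofReal (by positivity)]
  have h1 : ∀ x : ℝ, ‖f x‖ ^ ((2:ℝ≥0∞).toReal) = ‖f x‖ ^ 2 := fun x => by
    norm_num [Real.rpow_natCast]
  simp_rw [h1]
  rw [← Real.rpow_natCast (_ ^ ((2:ℝ≥0∞).toReal)⁻¹) 2, ← Real.rpow_mul h0]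
  norm_num

lemma integral_deriv_zero {F : ℝ → ℝ} (hF : ContDiff ℝ 1 F) (hs : HasCompactSupport F) :
    ∫ x, deriv F x = 0 := by
  have hint : Integrable (deriv F) :=
    (hF.continuous_deriv le_rfl).integrable_of_hasCompactSupport hs.deriv
  rw [← intervalIntegral.integral_Iic_add_Ioi (b := 0) hint.integrableOn hint.integrableOn,
    hs.integral_Iic_deriv_eq hF 0, hs.integral_Ioi_deriv_eq hF 0]
  ring

lemma le_integral_abs_deriv {g : ℝ → ℝ} (hg : ContDiff ℝ 1 g) (hs : HasCompactSupport g)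
    (x : ℝ) : g x ≤ ∫ y, |deriv g y| := by
  have hint : Integrable (deriv g) :=
    (hg.continuous_deriv le_rfl).integrable_of_hasCompactSupport hs.deriv
  rw [← hs.integral_Iic_deriv_eq hg x]
  calc ∫ y in Set.Iic x, deriv g y ≤ ∫ y in Set.Iic x, |deriv g y| :=
        integral_mono hint.restrict hint.abs.restrict fun y => le_abs_self _
    _ ≤ ∫ y, |deriv g y| :=
        setIntegral_le_integral hint.abs (ae_of_all _ fun y => abs_nonneg _)

lemma V2_atTop {V₂ : ℝ → ℝ} {β x₀ : ℝ} (hβ : 0 < β) (hnn : ∀ x, 0 ≤ V₂ x)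
    (hsm : ContDiff ℝ (⊤ : ℕ∞) V₂)
    (hincr : ∀ x > x₀, 0 < deriv V₂ x)
    (hrv : Tendsto (fun t => V₂ (t * 2) / V₂ t) atTop (nhds (|2| ^ β))) :
    Tendsto V₂ atTop atTop := by
  have hdiff : Differentiable ℝ V₂ := hsm.differentiable (by norm_num)
  have hmono : StrictMonoOn V₂ (Set.Ici x₀) := by
    apply strictMonoOn_of_deriv_pos (convex_Ici x₀) (hsm.continuous.continuousOn)
    intro x hx
    rw [interior_Ici] at hx
    exact hincr x hx
  set M : ℝ → ℝ := fun t => V₂ (max t x₀) with hM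
  have hMmono : Monotone M := fun a b hab =>
    hmono.monotoneOn (Set.mem_Ici.2 (le_max_right _ _)) (Set.mem_Ici.2 (le_max_right _ _))
      (max_le_max hab le_rfl)
  have heq : V₂ =ᶠ[atTop] M := by
    filter_upwards [eventually_ge_atTop x₀] with t ht
    simp [hM, max_eq_left ht]
  by_cases hbdd : BddAbove (Set.range M)
  · exfalso
    set L := ⨆ t, M t with hL
    have hML : Tendsto M atTop (nhds L) := tendsto_atTop_ciSup hMmono hbdd
    have hVL : Tendsto V₂ atTop (nhds L) := hML.congr' heq.symm
    have hLpos : 0 < L := by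
      have h1 : V₂ (x₀ + 1) < V₂ (x₀ + 2) :=
        hmono (by simp) (by norm_num [Set.mem_Ici]) (by linarith)
      have h2 : M (x₀ + 2) ≤ L := le_ciSup hbdd (x₀ + 2)
      have h3 : M (x₀ + 2) = V₂ (x₀ + 2) := by simp [hM, max_eq_left (by linarith : x₀ ≤ x₀ + 2)]
      have := hnn (x₀ + 1)
      rw [h3] at h2; linarith
    have hnum : Tendsto (fun t => V₂ (t * 2)) atTop (nhds L) :=
      hVL.comp (tendsto_id.atTop_mul_const two_pos)
    have hratio : Tendsto (fun t => V₂ (t * 2) / V₂ t) atTop (nhds (L / L)) :=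
      hnum.div hVL hLpos.ne'
    have h1 : |(2:ℝ)| ^ β = L / L := tendsto_nhds_unique hrv hratio
    rw [div_self hLpos.ne'] at h1
    have : (1:ℝ) < |(2:ℝ)| ^ β := by
      rw [abs_two]
      exact Real.one_lt_rpow_iff_of_pos (by norm_num) |>.2 (Or.inl ⟨by norm_num, hβ⟩)
    linarith
  · have hMtop : Tendsto M atTop atTop := by
      apply tendsto_atTop_atTop_of_monotone hMmono
      intro b
      rcases not_bddAbove_iff.1 hbdd b with ⟨y, ⟨t, rfl⟩, hy⟩
      exact ⟨t, hy.le⟩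
    exact hMtop.congr' heq.symm

set_option maxHeartbeats 1000000

/-- Lemma `lem:St.graphn`: uniform separation of the graph norm of
S_t⁰ = −∂ₓ + W_t and its adjoint ∂ₓ + W_t, with a constant independent of t. -/
theorem statement13 (V₂ : ℝ → ℝ) (β : ℝ) (hV : AssumptionR V₂ β) :
    ∃ C > 0, ∃ t₀ > 0, ∀ t ≥ t₀, ∀ s : ℝ, s = 1 ∨ s = -1 →
      ∀ u : ℝ → ℂ, ContDiff ℝ (⊤ : ℕ∞) u → HasCompactSupport u →
        C * (L2R (deriv u) ^ 2 +
              L2R (fun x => Complex.ofReal (V₂ (t * x) / V₂ t) * u x) ^ 2 +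
              L2R u ^ 2) ≤
          L2R (fun x => Complex.ofReal s * deriv u x +
              Complex.ofReal (V₂ (t * x) / V₂ t) * u x) ^ 2 + L2R u ^ 2 := by
  obtain ⟨x₀, hx₀pos, hincr⟩ := hV.eventually_incr
  obtain ⟨C₁, hC₁pos, hC₁⟩ := hV.controlled_derivs 1 le_rfl
  simp only [iteratedDeriv_one, pow_one] at hC₁
  have hβ := hV.beta_pos
  have hVdiff : Differentiable ℝ V₂ := hV.smooth.differentiable (by norm_num)
  have hVdcont : Continuous (deriv V₂) := hV.smooth.continuous_deriv (by norm_num)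
  set δ : ℝ := min 1 ((1/4 : ℝ) ^ (1/β)) with hδdef
  have hδpos : 0 < δ := lt_min one_pos (Real.rpow_pos_of_pos (by norm_num) _)
  have hδβ : δ ^ β ≤ 1/4 := by
    calc δ ^ β ≤ ((1/4:ℝ) ^ (1/β)) ^ β :=
          Real.rpow_le_rpow hδpos.le (min_le_right _ _) hβ.le
    _ = 1/4 := by
        rw [← Real.rpow_mul (by norm_num), one_div_mul_cancel hβ.ne', Real.rpow_one]
  set a₁ : ℝ := x₀ + 1 with ha₁def
  set C₀ : ℝ := ∫ y in (0:ℝ)..a₁, |deriv V₂ y| with hC₀def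
  have hC₀nn : 0 ≤ C₀ :=
    intervalIntegral.integral_nonneg (by linarith) (fun y _ => abs_nonneg _)
  have hVtop : Tendsto V₂ atTop atTop :=
    V2_atTop hβ hV.nonneg hV.smooth hincr (hV.reg_var 2 two_pos)
  -- eventual conditions
  have e1 : ∀ᶠ t : ℝ in atTop, (0:ℝ) < t := eventually_gt_atTop 0
  have e2 : ∀ᶠ t in atTop, 1 ≤ V₂ t := hVtop.eventually_ge_atTop 1
  have e3 : ∀ᶠ t in atTop, a₁ ≤ t * δ :=
    (tendsto_id.atTop_mul_const hδpos).eventually_ge_atTop a₁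
  have e4a : ∀ᶠ t in atTop, 8 * C₀ ≤ V₂ t := hVtop.eventually_ge_atTop _
  have e4b : ∀ᶠ t in atTop, V₂ (t * δ) / V₂ t ≤ 3/8 := by
    have h := hV.reg_var δ hδpos
    rw [abs_of_pos hδpos] at h
    exact h.eventually_le_const (by linarith)
  obtain ⟨t₁, ht₁⟩ := eventually_atTop.1 (e1.and (e2.and (e3.and (e4a.and e4b))))
  set ε : ℝ := δ / (2 * C₁) with hεdef
  have hεpos : 0 < ε := by positivity
  set K : ℝ := 2 + (C₁/δ) * (1 + 1/(4*ε)) with hKdef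
  have hK2 : 2 ≤ K := by
    have h : 0 ≤ (C₁/δ) * (1 + 1/(4*ε)) := by positivity
    rw [hKdef]; linarith
  refine ⟨1/(2*(K+1)), by positivity, max t₁ 1, lt_of_lt_of_le one_pos (le_max_right _ _),
    ?_⟩
  intro t ht s hs u hu hucs
  obtain ⟨htpos, hVt1, hta₁, hVt8, hratio⟩ := ht₁ t (le_trans (le_max_left _ _) ht)
  have hVtpos : 0 < V₂ t := lt_of_lt_of_le one_pos hVt1
  -- main definitions
  set W : ℝ → ℝ := fun x => V₂ (t*x) / V₂ t with hWdef
  set Wd : ℝ → ℝ := fun x => t * deriv V₂ (t*x) / V₂ t with hWddef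
  set g : ℝ → ℝ := fun x => (u x).re^2 + (u x).im^2 with hgdef
  set gd : ℝ → ℝ := fun x => 2 * (deriv u x * (starRingEnd ℂ) (u x)).re with hgddef
  have hu_diff : Differentiable ℝ u := hu.differentiable (by norm_num)
  have hud_cont : Continuous (deriv u) := hu.continuous_deriv (by norm_num)
  have hudcs : HasCompactSupport (deriv u) := hucs.deriv
  have hWcont : Continuous W :=
    ((hV.smooth.continuous).comp (continuous_const.mul continuous_id)).div_const _
  have hWdcont : Continuous Wd :=
    (continuous_const.mul (hVdcont.comp (continuous_const.mul continuous_id))).div_const _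
  have hWnn : ∀ x, 0 ≤ W x := fun x => div_nonneg (hV.nonneg _) hVtpos.le
  have hgnn : ∀ x, 0 ≤ g x := fun x => by positivity
  have hg_eq : ∀ x, g x = ‖u x‖^2 := by
    intro x
    rw [hgdef, Complex.sq_norm, Complex.normSq_apply]; ring
  have hgcs : HasCompactSupport g :=
    hucs.comp_left (g := fun z : ℂ => z.re^2 + z.im^2) (by simp)
  have hgdcs : HasCompactSupport gd := by
    apply hucs.mono'
    intro x hx
    by_contra hxs
    have hux : u x = 0 := image_eq_zero_of_notMem_tsupport hxs
    apply hx
    show gd x = 0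
    simp [hgddef, hux]
  have hu1 : ContDiff ℝ 1 u := hu.of_le (by norm_num)
  have hre1 : ContDiff ℝ 1 (fun x => (u x).re) := Complex.reCLM.contDiff.comp hu1
  have him1 : ContDiff ℝ 1 (fun x => (u x).im) := Complex.imCLM.contDiff.comp hu1
  have hgcd : ContDiff ℝ 1 g := (hre1.pow 2).add (him1.pow 2)
  have hgcont : Continuous g := hgcd.continuous
  have hgdcont : Continuous gd := by
    apply continuous_const.mul
    exact (Complex.continuous_re.comp (hud_cont.mul (Complex.continuous_conj.comp hu.continuous)))
  have hgderiv : ∀ x, HasDerivAt g (gd x) x := by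
    intro x
    have hux : HasDerivAt u (deriv u x) x := (hu_diff x).hasDerivAt
    have hre : HasDerivAt (fun y => (u y).re) ((deriv u x).re) x :=
      Complex.reCLM.hasFDerivAt.comp_hasDerivAt x hux
    have him : HasDerivAt (fun y => (u y).im) ((deriv u x).im) x :=
      Complex.imCLM.hasFDerivAt.comp_hasDerivAt x hux
    have heq : gd x = (2:ℕ) * (u x).re^(2-1) * (deriv u x).re
        + (2:ℕ) * (u x).im^(2-1) * (deriv u x).im := by
      simp [hgddef, Complex.mul_re, Complex.conj_re, Complex.conj_im]
      ring
    rw [heq]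
    exact (hre.pow 2).add (him.pow 2)
  have hWderiv : ∀ x, HasDerivAt W (Wd x) x := by
    intro x
    have h1 : HasDerivAt (fun y : ℝ => t * y) t x := by
      simpa using (hasDerivAt_id x).const_mul t
    have h2 : HasDerivAt V₂ (deriv V₂ (t*x)) (t*x) := (hVdiff (t*x)).hasDerivAt
    have h4 := (h2.comp x h1).div_const (V₂ t)
    have heq : Wd x = deriv V₂ (t*x) * t / V₂ t := by rw [hWddef]; ring
    rw [heq]
    exact h4
  have hWcd : ContDiff ℝ 1 W :=
    ((hV.smooth.of_le (by norm_num)).comp ((contDiff_const.mul contDiff_id))).div_const _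
  -- the main real quantities
  set A : ℝ := ∫ x, ‖deriv u x‖^2 with hAdef
  set Bv : ℝ := ∫ x, (W x)^2 * g x with hBvdef
  set U : ℝ := ∫ x, g x with hUdef
  have hAnn : 0 ≤ A := integral_nonneg fun x => by positivity
  have hBvnn : 0 ≤ Bv := integral_nonneg fun x => mul_nonneg (by positivity) (hgnn x)
  have hUnn : 0 ≤ U := integral_nonneg hgnn
  -- integrabilities
  have intg : Integrable g := hgcont.integrable_of_hasCompactSupport hgcs
  have intA : Integrable (fun x => ‖deriv u x‖^2) :=
    Continuous.integrable_of_hasCompactSupport (f := fun x => ‖deriv u x‖^2) (by fun_prop)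
      (hudcs.comp_left (g := fun z : ℂ => ‖z‖^2) (by simp))
  have intW2g : Integrable (fun x => (W x)^2 * g x) :=
    ((hWcont.pow 2).mul hgcont).integrable_of_hasCompactSupport hgcs.mul_left
  have intWdg : Integrable (fun x => Wd x * g x) :=
    (hWdcont.mul hgcont).integrable_of_hasCompactSupport hgcs.mul_left
  have intaWdg : Integrable (fun x => |Wd x| * g x) :=
    (hWdcont.abs.mul hgcont).integrable_of_hasCompactSupport hgcs.mul_left
  have intWgd : Integrable (fun x => W x * gd x) :=
    (hWcont.mul hgdcont).integrable_of_hasCompactSupport hgdcs.mul_left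
  -- integration by parts
  have hIBP : ∫ x, W x * gd x = - ∫ x, Wd x * g x := by
    have hF : ∀ x, HasDerivAt (fun y => W y * g y) (Wd x * g x + W x * gd x) x :=
      fun x => (hWderiv x).mul (hgderiv x)
    have hFcs : HasCompactSupport (fun y => W y * g y) := hgcs.mul_left
    have hFcd : ContDiff ℝ 1 (fun y => W y * g y) := hWcd.mul hgcd
    have h0 : ∫ x, (Wd x * g x + W x * gd x) = 0 := by
      have hz := integral_deriv_zero hFcd hFcs
      have heq : (fun x => deriv (fun y => W y * g y) x)
          = fun x => Wd x * g x + W x * gd x := funext fun x => (hF x).deriv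
      rwa [heq] at hz
    rw [integral_add intWdg intWgd] at h0
    linarith
  -- L2R conversions
  have hA : L2R (deriv u) ^ 2 = A := by
    rw [L2R_sq hud_cont hudcs]
  have hU : L2R u ^ 2 = U := by
    rw [L2R_sq hu.continuous hucs, hUdef]
    exact (integral_congr_ae (ae_of_all _ fun x => (hg_eq x).symm)).symm ▸ rfl
  have hB : L2R (fun x => Complex.ofReal (V₂ (t * x) / V₂ t) * u x) ^ 2 = Bv := by
    have hcontB : Continuous (fun x => Complex.ofReal (V₂ (t * x) / V₂ t) * u x) :=
      (Complex.continuous_ofReal.comp hWcont).mul hu.continuous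
    have hcsB : HasCompactSupport (fun x => Complex.ofReal (V₂ (t * x) / V₂ t) * u x) :=
      hucs.mul_left
    rw [hBvdef, L2R_sq hcontB hcsB]
    refine integral_congr_ae (ae_of_all _ fun x => ?_)
    show ‖Complex.ofReal (V₂ (t * x) / V₂ t) * u x‖^2 = (W x)^2 * g x
    have hWx : W x = V₂ (t * x) / V₂ t := rfl
    rw [norm_mul, Complex.norm_real, mul_pow, hg_eq x, Real.norm_eq_abs, sq_abs, hWx]
  have hQ : L2R (fun x => Complex.ofReal s * deriv u x +
      Complex.ofReal (V₂ (t * x) / V₂ t) * u x) ^ 2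
      = A + Bv + s * ∫ x, W x * gd x := by
    have hcont : Continuous (fun x => Complex.ofReal s * deriv u x +
        Complex.ofReal (V₂ (t * x) / V₂ t) * u x) :=
      (continuous_const.mul hud_cont).add
        ((Complex.continuous_ofReal.comp hWcont).mul hu.continuous)
    have hcs : HasCompactSupport (fun x => Complex.ofReal s * deriv u x +
        Complex.ofReal (V₂ (t * x) / V₂ t) * u x) :=
      (hudcs.mul_left).add (hucs.mul_left)
    rw [L2R_sq hcont hcs]
    have hkey : ∀ x, ‖Complex.ofReal s * deriv u x +
        Complex.ofReal (V₂ (t * x) / V₂ t) * u x‖^2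
        = ‖deriv u x‖^2 + (W x)^2 * g x + s * (W x * gd x) := by
      intro x
      have hWx : (W x : ℝ) = V₂ (t * x) / V₂ t := rfl
      rw [← hWx]
      rcases hs with rfl | rfl <;>
      · simp only [hgdef, hgddef, Complex.sq_norm,
          Complex.normSq_apply, Complex.add_re, Complex.add_im, Complex.mul_re,
          Complex.mul_im, Complex.ofReal_re, Complex.ofReal_im, Complex.conj_re,
          Complex.conj_im, Complex.ofReal_one, Complex.ofReal_neg, Complex.neg_re,
          Complex.neg_im, Complex.one_re, Complex.one_im]
        ring
    simp_rw [hkey]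
    have hi1 : Integrable (fun x => ‖deriv u x‖^2 + (W x)^2 * g x) := intA.add intW2g
    have hi2 : Integrable (fun x => s * (W x * gd x)) := intWgd.const_mul s
    rw [integral_add hi1 hi2, integral_add intA intW2g, integral_const_mul, hAdef, hBvdef]
  have hQnn : 0 ≤ L2R (fun x => Complex.ofReal s * deriv u x +
      Complex.ofReal (V₂ (t * x) / V₂ t) * u x) ^ 2 := sq_nonneg _
  -- the master bound
  have hGc : ∀ x, g x ≤ (1/2) * A + 2 * U := by
    intro x
    have h1 : g x ≤ ∫ y, |deriv g y| := le_integral_abs_deriv hgcd hgcs x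
    have h2 : (fun y => |deriv g y|) = fun y => |gd y| :=
      funext fun y => by rw [(hgderiv y).deriv]
    rw [h2] at h1
    have h3 : ∫ y, |gd y| ≤ ∫ y, ((1/2) * ‖deriv u y‖^2 + 2 * g y) := by
      have hi3 : Integrable (fun y => (1/2) * ‖deriv u y‖^2 + 2 * g y) :=
        (intA.const_mul _).add (intg.const_mul _)
      refine integral_mono (hgdcont.abs.integrable_of_hasCompactSupport (hgdcs.comp_left (g := abs) abs_zero))
        hi3 (fun y => ?_)
      show |gd y| ≤ (1/2) * ‖deriv u y‖^2 + 2 * g y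
      rw [hg_eq y]
      have hb : |gd y| ≤ 2 * (‖deriv u y‖ * ‖u y‖) := by
        have hb1 : |gd y| = 2 * |(deriv u y * (starRingEnd ℂ) (u y)).re| := by
          rw [hgddef, abs_mul]; norm_num
        rw [hb1]
        have hb2 : |(deriv u y * (starRingEnd ℂ) (u y)).re|
            ≤ ‖deriv u y * (starRingEnd ℂ) (u y)‖ := by
          exact Complex.abs_re_le_norm _
        have hb3 : ‖deriv u y * (starRingEnd ℂ) (u y)‖ = ‖deriv u y‖ * ‖u y‖ := by
          rw [norm_mul, RCLike.norm_conj]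
        linarith
      have hgy := hg_eq y
      have hsq : (0:ℝ) ≤ (‖deriv u y‖ - 2*‖u y‖)^2 := sq_nonneg _
      have hexp : (‖deriv u y‖ - 2*‖u y‖)^2
          = ‖deriv u y‖^2 - 4*(‖deriv u y‖ * ‖u y‖) + 4*‖u y‖^2 := by ring
      rw [hexp] at hsq
      linarith only [hb, hsq]
    have h4 : ∫ y, ((1/2) * ‖deriv u y‖^2 + 2 * g y) = (1/2)*A + 2*U := by
      rw [integral_add (intA.const_mul _) (intg.const_mul _), integral_const_mul,
        integral_const_mul, hAdef, hUdef]
    exact le_trans h1 (le_trans h3 (le_of_eq h4))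
  have hodd : ∀ y:ℝ, deriv V₂ (-y) = - deriv V₂ y := by
    intro y
    have h1 : HasDerivAt (fun z : ℝ => V₂ (-z)) (deriv V₂ (-y) * (-1)) y :=
      (hVdiff (-y)).hasDerivAt.comp y (hasDerivAt_neg y)
    have h2 : (fun z : ℝ => V₂ (-z)) = V₂ := funext hV.even
    rw [h2] at h1
    have h3 := h1.deriv
    linarith
  have hint1 : ∀ a b : ℝ, IntervalIntegrable (fun y => |deriv V₂ y|) volume a b :=
    fun a b => (hVdcont.abs).intervalIntegrable a b
  have hTV : ∫ x in (-δ)..δ, |Wd x| ≤ 1 := by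
    have habs : ∀ x:ℝ, |Wd x| = (t/V₂ t) * |deriv V₂ (t*x)| := by
      intro x
      rw [hWddef, abs_div, abs_mul, abs_of_pos htpos, abs_of_pos hVtpos]
      ring
    have step1 : ∫ x in (-δ)..δ, |Wd x|
        = (t/V₂ t) * ∫ x in (-δ)..δ, |deriv V₂ (t*x)| := by
      rw [← intervalIntegral.integral_const_mul]
      exact intervalIntegral.integral_congr fun x _ => habs x
    have step2 : ∫ x in (-δ)..δ, |deriv V₂ (t*x)|
        = t⁻¹ * ∫ y in (t*(-δ))..(t*δ), |deriv V₂ y| := by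
      rw [intervalIntegral.integral_comp_mul_left (fun y => |deriv V₂ y|) htpos.ne']
      rw [smul_eq_mul]
    have hneg : ∫ y in (-(t*δ))..(0:ℝ), |deriv V₂ y|
        = ∫ y in (0:ℝ)..(t*δ), |deriv V₂ y| := by
      have h1 : ∫ y in (0:ℝ)..(t*δ), |deriv V₂ (-y)|
          = ∫ y in (-(t*δ))..(-(0:ℝ)), |deriv V₂ y| :=
        intervalIntegral.integral_comp_neg (fun y => |deriv V₂ y|)
      rw [neg_zero] at h1
      rw [← h1]
      exact (intervalIntegral.integral_congr fun y _ => by rw [hodd y, abs_neg]).symm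
    have step3 : ∫ y in (-(t*δ))..(t*δ), |deriv V₂ y|
        = 2 * ∫ y in (0:ℝ)..(t*δ), |deriv V₂ y| := by
      rw [← intervalIntegral.integral_add_adjacent_intervals (b := (0:ℝ))
        (hint1 _ _) (hint1 _ _), hneg]
      ring
    have step4 : ∫ y in (0:ℝ)..(t*δ), |deriv V₂ y| ≤ C₀ + V₂ (t*δ) := by
      rw [← intervalIntegral.integral_add_adjacent_intervals (b := a₁)
        (hint1 _ _) (hint1 _ _)]
      have hpos : ∫ y in a₁..(t*δ), |deriv V₂ y| = ∫ y in a₁..(t*δ), deriv V₂ y := by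
        refine intervalIntegral.integral_congr fun y hy => ?_
        rw [Set.uIcc_of_le hta₁] at hy
        exact abs_of_pos (hincr y (by rw [ha₁def] at hy; linarith [hy.1]))
      rw [hpos, intervalIntegral.integral_deriv_eq_sub (fun y _ => hVdiff y)
        (hVdcont.intervalIntegrable _ _)]
      have := hV.nonneg a₁
      rw [hC₀def]
      linarith
    have hfin : (t/V₂ t) * (t⁻¹ * (2 * ∫ y in (0:ℝ)..(t*δ), |deriv V₂ y|))
        = 2 * ((∫ y in (0:ℝ)..(t*δ), |deriv V₂ y|) / V₂ t) := by
      field_simp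
    rw [step1, step2, mul_neg, step3, hfin]
    have h1 : C₀ / V₂ t ≤ 1/8 := by rw [div_le_iff₀ hVtpos]; linarith
    have h2 : (∫ y in (0:ℝ)..(t*δ), |deriv V₂ y|) / V₂ t ≤ (C₀ + V₂ (t*δ))/V₂ t := by
      gcongr
    have h3 : (C₀ + V₂ (t*δ))/V₂ t = C₀/V₂ t + V₂ (t*δ)/V₂ t := by ring
    rw [h3] at h2
    linarith
  have hOuter : ∀ x, δ ≤ |x| → |Wd x| ≤ (C₁/δ) * (ε * (W x)^2 + (1 + 1/(4*ε))) := by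
    intro x hx
    have hWdx : |Wd x| = t * |deriv V₂ (t*x)| / V₂ t := by
      rw [hWddef, abs_div, abs_mul, abs_of_pos htpos, abs_of_pos hVtpos]
    have htδ : 0 < t * δ := by positivity
    have hjbr : t * δ ≤ jbr (t*x) := by
      have h1 : |t*x| ≤ jbr (t*x) := by
        rw [jbr]
        calc |t*x| = Real.sqrt ((t*x)^2) := (Real.sqrt_sq_eq_abs _).symm
        _ ≤ _ := Real.sqrt_le_sqrt (by linarith [sq_nonneg (t*x)])
      calc t*δ ≤ t*|x| := mul_le_mul_of_nonneg_left hx htpos.le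
      _ = |t*x| := by rw [abs_mul, abs_of_pos htpos]
      _ ≤ jbr (t*x) := h1
    have hjpos : 0 < jbr (t*x) := lt_of_lt_of_le htδ hjbr
    have hVynn : 0 ≤ V₂ (t*x) := hV.nonneg _
    have h1 : t * |deriv V₂ (t*x)| / V₂ t ≤ t * (C₁*(1+V₂ (t*x))/jbr (t*x)) / V₂ t := by
      gcongr
      exact hC₁ (t*x)
    have h2 : t * (C₁*(1+V₂ (t*x))/jbr (t*x)) / V₂ t
        ≤ t * (C₁*(1+V₂ (t*x))/(t*δ)) / V₂ t := by
      have hnum : (0:ℝ) ≤ C₁*(1+V₂ (t*x)) := mul_nonneg hC₁pos.le (by linarith)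
      gcongr
      all_goals first | exact hnum | exact hjbr | positivity
    have h3 : t * (C₁*(1+V₂ (t*x))/(t*δ)) / V₂ t = (C₁/δ) * ((1+V₂ (t*x))/V₂ t) := by
      field_simp
    have h4 : (1+V₂ (t*x))/V₂ t ≤ 1 + W x := by
      have hWx : W x = V₂ (t*x) / V₂ t := rfl
      have he : (1+V₂ (t*x))/V₂ t = 1/V₂ t + V₂ (t*x)/V₂ t := by ring
      have h1V : 1/V₂ t ≤ 1 := by rw [div_le_one hVtpos]; exact hVt1
      rw [he, hWx]
      linarith
    have h5 : 1 + W x ≤ ε*(W x)^2 + (1+1/(4*ε)) := by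
      have hkey : ε*(W x)^2 + 1/(4*ε) - W x = (2*ε*(W x)-1)^2 / (4*ε) := by
        field_simp
        ring
      have h0 : (0:ℝ) ≤ (2*ε*(W x)-1)^2 / (4*ε) := by positivity
      linarith
    have hCδ : (0:ℝ) ≤ C₁/δ := by positivity
    calc |Wd x| = t * |deriv V₂ (t*x)| / V₂ t := hWdx
    _ ≤ t * (C₁*(1+V₂ (t*x))/(t*δ)) / V₂ t := le_trans h1 h2
    _ = (C₁/δ) * ((1+V₂ (t*x))/V₂ t) := h3
    _ ≤ (C₁/δ) * (1 + W x) := mul_le_mul_of_nonneg_left h4 hCδ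
    _ ≤ _ := mul_le_mul_of_nonneg_left h5 hCδ
  have hmaster : ∫ x, |Wd x| * g x
      ≤ ((1/2)*A + 2*U) + (1/2) * Bv + ((C₁/δ) * (1 + 1/(4*ε))) * U := by
    have hptwise : ∀ x, |Wd x| * g x ≤
        Set.indicator (Set.Icc (-δ) δ) (fun x => |Wd x| * ((1/2)*A + 2*U)) x
        + (C₁/δ) * (ε*(W x)^2 + (1+1/(4*ε))) * g x := by
      intro x
      by_cases hx : x ∈ Set.Icc (-δ) δ
      · rw [Set.indicator_of_mem hx]
        have h1 : |Wd x| * g x ≤ |Wd x| * ((1/2)*A + 2*U) :=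
          mul_le_mul_of_nonneg_left (hGc x) (abs_nonneg _)
        have h2 : 0 ≤ (C₁/δ) * (ε*(W x)^2 + (1+1/(4*ε))) * g x := by
          have := hgnn x
          have h2a : (0:ℝ) ≤ (C₁/δ) * (ε*(W x)^2 + (1+1/(4*ε))) := by positivity
          exact mul_nonneg h2a this
        linarith
      · rw [Set.indicator_of_notMem hx]
        have hxd : δ ≤ |x| := by
          by_contra hcon
          push_neg at hcon
          exact hx (Set.mem_Icc.2 (abs_le.1 hcon.le))
        have h1 := mul_le_mul_of_nonneg_right (hOuter x hxd) (hgnn x)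
        linarith
    have hind_int : Integrable
        (Set.indicator (Set.Icc (-δ) δ) (fun x => |Wd x| * ((1/2)*A + 2*U))) :=
      ((hWdcont.abs.mul continuous_const).integrableOn_Icc).integrable_indicator
        measurableSet_Icc
    have hout_int : Integrable (fun x => (C₁/δ) * (ε*(W x)^2 + (1+1/(4*ε))) * g x) :=
      ((continuous_const.mul ((continuous_const.mul (hWcont.pow 2)).add
        continuous_const)).mul hgcont).integrable_of_hasCompactSupport hgcs.mul_left
    have hsum_int : Integrable (fun x => Set.indicator (Set.Icc (-δ) δ)
        (fun x => |Wd x| * ((1/2)*A + 2*U)) x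
        + (C₁/δ) * (ε*(W x)^2 + (1+1/(4*ε))) * g x) := hind_int.add hout_int
    have hstep : ∫ x, |Wd x| * g x
        ≤ (∫ x, Set.indicator (Set.Icc (-δ) δ) (fun x => |Wd x| * ((1/2)*A + 2*U)) x)
          + ∫ x, (C₁/δ) * (ε*(W x)^2 + (1+1/(4*ε))) * g x :=
      le_trans (integral_mono intaWdg hsum_int hptwise)
        (le_of_eq (integral_add hind_int hout_int))
    have hindeq : ∫ x, Set.indicator (Set.Icc (-δ) δ)
        (fun x => |Wd x| * ((1/2)*A + 2*U)) x
        = (∫ x in Set.Icc (-δ) δ, |Wd x|) * ((1/2)*A + 2*U) := by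
      rw [integral_indicator measurableSet_Icc, ← integral_mul_const]
    have hindle : (∫ x in Set.Icc (-δ) δ, |Wd x|) ≤ 1 := by
      have heq2 : ∫ x in Set.Icc (-δ) δ, |Wd x| = ∫ x in (-δ)..δ, |Wd x| := by
        rw [intervalIntegral.integral_of_le (by linarith), integral_Icc_eq_integral_Ioc]
      rw [heq2]; exact hTV
    have hGcnn : (0:ℝ) ≤ (1/2)*A + 2*U := by linarith
    have houteq : ∫ x, (C₁/δ) * (ε*(W x)^2 + (1+1/(4*ε))) * g x
        = (1/2) * Bv + ((C₁/δ)*(1+1/(4*ε))) * U := by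
      have hptw : ∀ x, (C₁/δ) * (ε*(W x)^2 + (1+1/(4*ε))) * g x
          = ((C₁/δ)*ε) * ((W x)^2 * g x) + ((C₁/δ)*(1+1/(4*ε))) * g x := fun x => by ring
      simp_rw [hptw]
      rw [integral_add (intW2g.const_mul _) (intg.const_mul _), integral_const_mul,
        integral_const_mul, hBvdef, hUdef]
      have hce : (C₁/δ)*ε = 1/2 := by
        rw [hεdef]
        field_simp
      rw [hce]
    rw [hindeq, houteq] at hstep
    have hlast := mul_le_mul_of_nonneg_right hindle hGcnn
    calc ∫ x, |Wd x| * g x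
        ≤ (∫ x in Set.Icc (-δ) δ, |Wd x|) * ((1/2)*A + 2*U)
          + ((1/2) * Bv + ((C₁/δ)*(1+1/(4*ε))) * U) := hstep
    _ ≤ 1 * ((1/2)*A + 2*U) + ((1/2) * Bv + ((C₁/δ)*(1+1/(4*ε))) * U) := by linarith
    _ = ((1/2)*A + 2*U) + (1/2) * Bv + ((C₁/δ) * (1 + 1/(4*ε))) * U := by ring
  -- cross term bound
  have hcross : |∫ x, Wd x * g x| ≤ ((1/2)*A + 2*U) + (1/2) * Bv + ((C₁/δ) * (1 + 1/(4*ε))) * U := by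
    have h1 : |∫ x, Wd x * g x| ≤ ∫ x, |Wd x| * |g x| := by
      simpa [Real.norm_eq_abs, abs_mul] using
        norm_integral_le_integral_norm (μ := volume) (fun x => Wd x * g x)
    have h2 : (fun x => |Wd x| * |g x|) = fun x => |Wd x| * g x :=
      funext fun x => by rw [abs_of_nonneg (hgnn x)]
    rw [h2] at h1
    exact le_trans h1 hmaster
  -- finish
  rw [hA, hB, hU, hQ]
  have hscross : s * ∫ x, W x * gd x ≥ -(((1/2)*A + 2*U) + (1/2) * Bv + ((C₁/δ) * (1 + 1/(4*ε))) * U) := by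
    rw [hIBP]
    have h1 := le_abs_self (∫ x, Wd x * g x)
    have h2 := neg_abs_le (∫ x, Wd x * g x)
    rcases hs with rfl | rfl
    · simp only [one_mul]; linarith
    · simp only [neg_one_mul, neg_neg]; linarith
  have hQlow : A + Bv + s * (∫ x, W x * gd x) ≥ (1/2)*(A+Bv) - K*U := by
    rw [hKdef]; linarith
  have hQnn' : 0 ≤ A + Bv + s * ∫ x, W x * gd x := by rw [← hQ]; exact hQnn
  -- final arithmetic
  set Q : ℝ := A + Bv + s * ∫ x, W x * gd x with hQdef
  have hKpos : (0:ℝ) < K + 1 := by linarith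
  have l2 : Q + U ≥ (1/(K+1)) * Q + U := by
    have h1 : (1 - 1/(K+1)) * Q ≥ 0 := by
      apply mul_nonneg _ hQnn'
      rw [sub_nonneg, div_le_one hKpos]; linarith
    linarith
  have l3 : (1/(K+1)) * Q ≥ (1/(K+1)) * ((1/2)*(A+Bv) - K*U) := by
    apply mul_le_mul_of_nonneg_left hQlow (by positivity)
  have l4 : (1/(K+1)) * ((1/2)*(A+Bv) - K*U) + U
      = (1/(2*(K+1))) * (A+Bv) + (1/(K+1)) * U := by
    field_simp
    ring
  have l5 : (1/(2*(K+1))) * U ≤ (1/(K+1)) * U := by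
    apply mul_le_mul_of_nonneg_right _ hUnn
    rw [div_le_div_iff₀ (by linarith) hKpos]
    linarith
  linarith
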